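/- If a, b, and q are such that [T_q(Δ_{ab})] = [Δ_{ba}] with a, b rational (sides of the triangle rational), then q = (b²-1)/(a²+b²-2), q = (1-a²)/(b²+1-2a²), or q = (a²-b²)/(1+a²-2b²), and in particular q is rational whenever the relevant denominator is nonzero. -/

import Mathlib

open Complex Real

noncomputable def ρ : ℂ := Complex.exp (Real.pi * Complex.I / 3)

/-- The Nakamura–Oguiso moduli parameter of the triangle `△z01`. -/
noncomputable def φ (z : ℂ) : ℂ := ((z - ρ) / (z - ρ⁻¹)) ^ 3

/-- The complex number whose argument (times 6) gives the rotation angle of `T_q`. -/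
noncomputable def zq (q : ℝ) : ℂ := -1 + ((1 - 2 * q : ℝ) : ℂ) * (Real.sqrt 3 : ℂ) * Complex.I

set_option maxHeartbeats 2000000 in
/-- If `Δ_{ba}` has rational side lengths `1, b, a` (apex `z` with `|z| = a`, `|z-1| = b`),
is not equilateral, and the rotation `T_q` maps the moduli point of the mirror triangle
`Δ_{ab}` (the conjugate moduli point) to that of `Δ_{ba}`, then `q` is one of the three
stated rational expressions in `a, b`; in particular `q` is rational. -/
theorem stmt16 (a b : ℚ) (ha : 0 < a) (hb : 0 < b) (hreg : ¬(a = 1 ∧ b = 1))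
    (z : ℂ) (hzim : 0 < z.im) (hza : ‖z‖ = (a : ℝ))
    (hzb : ‖z - 1‖ = (b : ℝ)) (q : ℝ)
    (hT : (zq q / (‖zq q‖ : ℝ)) ^ 6 * (starRingEnd ℂ) (φ z) = φ z) :
    (q = ((b : ℝ) ^ 2 - 1) / ((a : ℝ) ^ 2 + (b : ℝ) ^ 2 - 2) ∨
     q = (1 - (a : ℝ) ^ 2) / ((b : ℝ) ^ 2 + 1 - 2 * (a : ℝ) ^ 2) ∨
     q = ((a : ℝ) ^ 2 - (b : ℝ) ^ 2) / (1 + (a : ℝ) ^ 2 - 2 * (b : ℝ) ^ 2)) ∧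
    ∃ r : ℚ, q = (r : ℝ) := by
  set s : ℝ := Real.sqrt 3 with hsdef
  have hs2 : s ^ 2 = 3 := Real.sq_sqrt (by norm_num)
  have hs0 : (0:ℝ) < s := Real.sqrt_pos.mpr (by norm_num)
  -- components of ρ and ρ⁻¹
  have hρ : ρ = Complex.exp ((↑(Real.pi/3)) * Complex.I) := by
    unfold ρ; congr 1; push_cast; ring
  have hρre : ρ.re = 1/2 := by
    rw [hρ, Complex.exp_ofReal_mul_I_re, Real.cos_pi_div_three]
  have hρim : ρ.im = s/2 := by
    rw [hρ, Complex.exp_ofReal_mul_I_im, Real.sin_pi_div_three]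
  have hnρ : Complex.normSq ρ = 1 := by
    rw [Complex.normSq_apply, hρre, hρim]; nlinarith [hs2]
  have hρinv : ρ⁻¹ = (starRingEnd ℂ) ρ := by
    rw [Complex.inv_def, hnρ]; simp
  have hρire : (ρ⁻¹).re = 1/2 := by rw [hρinv]; simp [hρre]
  have hρiim : (ρ⁻¹).im = -(s/2) := by rw [hρinv]; simp [hρim]
  -- components of zq
  have hzqre : (zq q).re = -1 := by simp [zq]
  have hzqim : (zq q).im = (1 - 2*q) * s := by simp [zq, hsdef]
  have hzqne : zq q ≠ 0 := by
    intro h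
    rw [h] at hzqre
    norm_num at hzqre
  -- side conditions
  have hx2 : z.re^2 + z.im^2 = (a:ℝ)^2 := by
    have h := Complex.sq_norm z
    rw [hza, Complex.normSq_apply] at h
    linear_combination -h
  have hb2 : (z.re - 1)^2 + z.im^2 = (b:ℝ)^2 := by
    have h := Complex.sq_norm (z - 1)
    rw [hzb, Complex.normSq_apply] at h
    simp only [Complex.sub_re, Complex.sub_im, Complex.one_re, Complex.one_im] at h
    linear_combination -h
  -- turn hT into a statement about Z := zq^3 * conj(φ z)
  have habs : ((‖zq q‖ : ℝ) : ℂ) ≠ 0 := by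
    simp only [ne_eq, Complex.ofReal_eq_zero]
    exact (norm_ne_zero_iff.mpr hzqne)
  have h1 : (zq q)^6 * (starRingEnd ℂ) (φ z)
      = ((‖zq q‖ : ℝ) : ℂ)^6 * φ z := by
    rw [div_pow] at hT
    field_simp at hT
    linear_combination hT
  set Z : ℂ := (zq q)^3 * (starRingEnd ℂ) (φ z) with hZdef
  have hZ2 : Z^2 = ((( ‖zq q‖)^6 * (‖φ z‖)^2 : ℝ) : ℂ) := by
    have h2 : Z^2 = ((zq q)^6 * (starRingEnd ℂ) (φ z)) * (starRingEnd ℂ) (φ z) := by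
      rw [hZdef]; ring
    rw [h2, h1, mul_assoc, Complex.mul_conj, Complex.normSq_eq_norm_sq]
    push_cast
    ring
  have hZim : Z.im = 0 := by
    have h2 : (Z^2).im = 0 := by rw [hZ2]; exact Complex.ofReal_im _
    have h3 : (0:ℝ) ≤ (Z^2).re := by
      rw [hZ2, Complex.ofReal_re]; positivity
    rw [sq, Complex.mul_im] at h2
    rw [sq, Complex.mul_re] at h3
    rcases mul_eq_zero.1 (by linarith : Z.re * Z.im = 0) with h | h
    · nlinarith
    · exact h
  -- the polynomial quantity W
  set W : ℂ := zq q * (starRingEnd ℂ) (z - ρ) * (z - ρ⁻¹) with hWdef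
  have hD2ne : z - ρ⁻¹ ≠ 0 := by
    intro h
    have := congrArg Complex.im h
    simp only [Complex.sub_im, hρiim, Complex.zero_im] at this
    linarith
  have hD2cne : (starRingEnd ℂ) (z - ρ⁻¹) ≠ 0 := by
    intro h
    apply hD2ne
    have h2 := congrArg (starRingEnd ℂ) h
    simpa using h2
  have hW3 : W^3 = Z * ((Complex.normSq (z - ρ⁻¹) : ℝ) : ℂ)^3 := by
    set d1 : ℂ := (starRingEnd ℂ) (z - ρ) with hd1
    set d2 : ℂ := z - ρ⁻¹ with hd2
    set d2c : ℂ := (starRingEnd ℂ) (z - ρ⁻¹) with hd2c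
    have hc : d2c * d2 = ((Complex.normSq (z - ρ⁻¹) : ℝ) : ℂ) := by
      rw [hd2c, hd2, mul_comm, Complex.mul_conj]
    have hφc : (starRingEnd ℂ) (φ z) = (d1 / d2c)^3 := by
      rw [show φ z = ((z - ρ) / (z - ρ⁻¹))^3 from rfl, map_pow, map_div₀]
    have hd2cne : d2c ≠ 0 := hD2cne
    rw [hWdef, hZdef, hφc, ← hc]
    field_simp
  have hW3im : (W^3).im = 0 := by
    rw [hW3]
    simp [Complex.mul_im, hZim, ← Complex.ofReal_pow]
  have hcube : 3 * W.re^2 * W.im - W.im^3 = 0 := by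
    have h4 : (W^3).im = 3 * W.re^2 * W.im - W.im^3 := by
      rw [pow_succ, pow_succ, pow_one]
      simp [Complex.mul_im, Complex.mul_re]
      ring
    rw [h4] at hW3im
    exact hW3im
  -- components of W
  have hWre : W.re = -((z.re - 1/2)^2 + z.im^2 - s^2/4) - (1-2*q)*(z.re - 1/2)*s^2 := by
    rw [hWdef]
    simp only [Complex.mul_re, Complex.mul_im, Complex.sub_re, Complex.sub_im,
      Complex.conj_re, Complex.conj_im, hρre, hρim, hρire, hρiim, hzqre, hzqim]
    ring
  have hWim : W.im = (1-2*q)*s*((z.re - 1/2)^2 + z.im^2 - s^2/4) - (z.re - 1/2)*s := by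
    rw [hWdef]
    simp only [Complex.mul_re, Complex.mul_im, Complex.sub_re, Complex.sub_im,
      Complex.conj_re, Complex.conj_im, hρre, hρim, hρire, hρiim, hzqre, hzqim]
    ring
  have key : W.im * ((s * W.re - W.im) * (s * W.re + W.im)) = 0 := by
    linear_combination hcube + W.re^2 * W.im * hs2
  -- helper facts for rationals
  have hane : (0:ℚ) < a + 1 := by linarith
  have hbne : (0:ℚ) < b + 1 := by linarith
  rcases mul_eq_zero.1 key with hv | hk
  · -- Case 1 : q = (b²-1)/(a²+b²-2)
    rw [hWim] at hv
    have E1 : (1-2*q) * ((a:ℝ)^2 + (b:ℝ)^2 - 2) = (a:ℝ)^2 - (b:ℝ)^2 := by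
      have H2 : s * ((1-2*q) * ((a:ℝ)^2 + (b:ℝ)^2 - 2)) = s * ((a:ℝ)^2 - (b:ℝ)^2) := by
        linear_combination 2*hv + ((1-2*q)*s/2)*hs2 + (-(s*(1-2*q)-s))*hx2
          + (-(s*(1-2*q)+s))*hb2
      exact mul_left_cancel₀ (ne_of_gt hs0) H2
    by_cases hd : a^2 + b^2 - 2 = 0
    · exfalso
      have hdR : (a:ℝ)^2 + (b:ℝ)^2 - 2 = 0 := by exact_mod_cast hd
      have hab : (a:ℝ)^2 = (b:ℝ)^2 := by
        linear_combination -E1 + (1-2*q)*hdR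
      have hab' : a^2 = b^2 := by exact_mod_cast hab
      have ha1 : a = 1 := by
        have : (a-1)*(a+1) = 0 := by linear_combination (hd + hab')/2
        rcases mul_eq_zero.1 this with h | h
        · linarith
        · linarith
      have hb1 : b = 1 := by
        have : (b-1)*(b+1) = 0 := by linear_combination (hd - hab')/2
        rcases mul_eq_zero.1 this with h | h
        · linarith
        · linarith
      exact hreg ⟨ha1, hb1⟩
    · have hdR : (a:ℝ)^2 + (b:ℝ)^2 - 2 ≠ 0 := by
        intro h; apply hd; exact_mod_cast h
      have hq : q = ((b:ℝ)^2 - 1) / ((a:ℝ)^2 + (b:ℝ)^2 - 2) := by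
        rw [eq_div_iff hdR]
        linear_combination -E1/2
      refine ⟨Or.inl hq, (b^2 - 1)/(a^2 + b^2 - 2), ?_⟩
      rw [hq]; push_cast; ring
  · rcases mul_eq_zero.1 hk with hv | hv
    · -- Case 2 : q = (1-a²)/(b²+1-2a²)
      rw [hWre, hWim] at hv
      have E2 : (1-2*q) * (2*(a:ℝ)^2 - (b:ℝ)^2 - 1) = 1 - (b:ℝ)^2 := by
        have H2 : s * ((1-2*q) * (2*(a:ℝ)^2 - (b:ℝ)^2 - 1)) = s * (1 - (b:ℝ)^2) := by
          linear_combination (-1)*hv + (-((1-2*q)*s*(z.re - 3/4) - s/4))*hs2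
            + (-2*s*(1-2*q))*hx2 + (-(s - s*(1-2*q)))*hb2
        exact mul_left_cancel₀ (ne_of_gt hs0) H2
      by_cases hd : b^2 + 1 - 2*a^2 = 0
      · exfalso
        have hdR : (b:ℝ)^2 + 1 - 2*(a:ℝ)^2 = 0 := by exact_mod_cast hd
        have hbb : (b:ℝ)^2 = 1 := by linear_combination E2 + (1-2*q)*hdR
        have hbb' : b^2 = 1 := by exact_mod_cast hbb
        have hb1 : b = 1 := by
          have : (b-1)*(b+1) = 0 := by linear_combination hbb'
          rcases mul_eq_zero.1 this with h | h
          · linarith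
          · linarith
        have ha1 : a = 1 := by
          have : (a-1)*(a+1) = 0 := by linear_combination (hbb' - hd)/2
          rcases mul_eq_zero.1 this with h | h
          · linarith
          · linarith
        exact hreg ⟨ha1, hb1⟩
      · have hdR : (b:ℝ)^2 + 1 - 2*(a:ℝ)^2 ≠ 0 := by
          intro h; apply hd; exact_mod_cast h
        have hq : q = (1 - (a:ℝ)^2) / ((b:ℝ)^2 + 1 - 2*(a:ℝ)^2) := by
          rw [eq_div_iff hdR]
          linear_combination E2/2
        refine ⟨Or.inr (Or.inl hq), (1 - a^2)/(b^2 + 1 - 2*a^2), ?_⟩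
        rw [hq]; push_cast; ring
    · -- Case 3 : q = (a²-b²)/(1+a²-2b²)
      rw [hWre, hWim] at hv
      have E3 : (1-2*q) * (2*(b:ℝ)^2 - (a:ℝ)^2 - 1) = (a:ℝ)^2 - 1 := by
        have H2 : s * ((1-2*q) * (2*(b:ℝ)^2 - (a:ℝ)^2 - 1)) = s * ((a:ℝ)^2 - 1) := by
          linear_combination hv + ((1-2*q)*s*(z.re - 1/4) - s/4)*hs2
            + (s*(1-2*q)+s)*hx2 + (-2*s*(1-2*q))*hb2
        exact mul_left_cancel₀ (ne_of_gt hs0) H2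
      by_cases hd : 1 + a^2 - 2*b^2 = 0
      · exfalso
        have hdR : 1 + (a:ℝ)^2 - 2*(b:ℝ)^2 = 0 := by exact_mod_cast hd
        have haa : (a:ℝ)^2 = 1 := by linear_combination -E3 - (1-2*q)*hdR
        have haa' : a^2 = 1 := by exact_mod_cast haa
        have ha1 : a = 1 := by
          have : (a-1)*(a+1) = 0 := by linear_combination haa'
          rcases mul_eq_zero.1 this with h | h
          · linarith
          · linarith
        have hb1 : b = 1 := by
          have : (b-1)*(b+1) = 0 := by linear_combination (haa' - hd)/2
          rcases mul_eq_zero.1 this with h | h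
          · linarith
          · linarith
        exact hreg ⟨ha1, hb1⟩
      · have hdR : 1 + (a:ℝ)^2 - 2*(b:ℝ)^2 ≠ 0 := by
          intro h; apply hd; exact_mod_cast h
        have hq : q = ((a:ℝ)^2 - (b:ℝ)^2) / (1 + (a:ℝ)^2 - 2*(b:ℝ)^2) := by
          rw [eq_div_iff hdR]
          linear_combination E3/2
        refine ⟨Or.inr (Or.inr hq), (a^2 - b^2)/(1 + a^2 - 2*b^2), ?_⟩
        rw [hq]; push_cast; ring
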